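/- A real 3×3 matrix A is a scaled GBR matrix (i.e. there exist s ≠ 0, λ ≠ 0 and μ, ν ∈ ℝ with A = s·[[λ,0,−μ],[0,λ,−ν],[0,0,1]]) if and only if A is invertible and its entries satisfy A^{2,1}_{3,2} = A^{2,1}_{3,3} = A^{1,2}_{3,3} = A^{1,1}_{3,2} = 0 and A^{2,2}_{3,3} = A^{1,1}_{3,3}, where A^{i,j}_{k,l} = A_{ij}·A_{kl} − A_{kj}·A_{il}. -/

import Mathlib

/-- The GBR (generalized bas-relief) matrix with parameters (λ, μ, ν). -/
def GBR (l m n : ℝ) : Matrix (Fin 3) (Fin 3) ℝ :=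
  !![l, 0, -m; 0, l, -n; 0, 0, 1]

/-- The 2×2 minor C^{i,j}_{k,l} = C_{ij}·C_{kl} − C_{kj}·C_{il} (indices 0-based here). -/
def minor3 (C : Matrix (Fin 3) (Fin 3) ℝ) (i j k l : Fin 3) : ℝ :=
  C i j * C k l - C k j * C i l

/-- A 3×3 matrix is a scaled GBR matrix iff it is invertible and satisfies
A^{2,1}_{3,2} = A^{2,1}_{3,3} = A^{1,2}_{3,3} = A^{1,1}_{3,2} = 0 and
A^{2,2}_{3,3} = A^{1,1}_{3,3} (1-based index notation). -/
theorem scaled_GBR_characterization (A : Matrix (Fin 3) (Fin 3) ℝ) :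
    (∃ s l m n : ℝ, s ≠ 0 ∧ l ≠ 0 ∧ A = s • GBR l m n) ↔
    (IsUnit A.det ∧
      minor3 A 1 0 2 1 = 0 ∧ minor3 A 1 0 2 2 = 0 ∧
      minor3 A 0 1 2 2 = 0 ∧ minor3 A 0 0 2 1 = 0 ∧
      minor3 A 1 1 2 2 = minor3 A 0 0 2 2) := by
  constructor
  · rintro ⟨s, l, m, n, hs, hl, rfl⟩
    refine ⟨?_, ?_, ?_, ?_, ?_, ?_⟩
    · rw [isUnit_iff_ne_zero, Matrix.det_fin_three]
      simp only [Matrix.smul_apply, GBR, Matrix.cons_val', Matrix.cons_val_zero,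
        Matrix.cons_val_one, Matrix.head_cons, Matrix.empty_val', Matrix.cons_val_fin_one,
        Matrix.head_fin_const, Matrix.of_apply, Matrix.cons_val_two, Matrix.tail_cons,
        smul_eq_mul]
      intro h
      apply hs
      have : s * l * (s * l * (s * 1)) = 0 := by linarith [h]
      have h2 : s ^ 3 * l ^ 2 = 0 := by ring_nf; ring_nf at this; linarith
      rcases mul_eq_zero.mp h2 with h3 | h3
      · exact pow_eq_zero_iff (n := 3) (by norm_num) |>.mp h3
      · exact absurd (pow_eq_zero_iff (n := 2) (by norm_num) |>.mp h3) hl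
    all_goals
      simp only [minor3, Matrix.smul_apply, GBR, Matrix.cons_val', Matrix.cons_val_zero,
        Matrix.cons_val_one, Matrix.head_cons, Matrix.empty_val', Matrix.cons_val_fin_one,
        Matrix.head_fin_const, Matrix.of_apply, Matrix.cons_val_two, Matrix.tail_cons,
        smul_eq_mul]
      ring
  · rintro ⟨hdet, h1, h2, h3, h4, h5⟩
    rw [isUnit_iff_ne_zero] at hdet
    simp only [minor3] at h1 h2 h3 h4 h5
    have hd : A.det = A 0 0 * (A 1 1 * A 2 2 - A 1 2 * A 2 1) -
        A 0 1 * (A 1 0 * A 2 2 - A 1 2 * A 2 0) +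
        A 0 2 * (A 1 0 * A 2 1 - A 1 1 * A 2 0) := by
      rw [Matrix.det_fin_three]; ring
    have h20 : A 2 0 = 0 := by
      have key : A.det * A 2 0 = 0 := by
        rw [hd]
        linear_combination (A 0 2 * A 2 0 - A 0 0 * A 2 2) * h1 +
          (A 0 0 * A 2 1 - A 0 1 * A 2 0) * h2
      rcases mul_eq_zero.mp key with h | h
      · exact absurd h hdet
      · exact h
    have h21 : A 2 1 = 0 := by
      have key : A.det * A 2 1 = 0 := by
        rw [hd]
        linear_combination (A 0 2 * A 2 1 - A 0 1 * A 2 2) * h1 +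
          (A 1 1 * A 2 2 - A 1 2 * A 2 1) * h4
      rcases mul_eq_zero.mp key with h | h
      · exact absurd h hdet
      · exact h
    have h22 : A 2 2 ≠ 0 := by
      intro h
      apply hdet
      rw [hd, h20, h21, h]
      ring
    have h10 : A 1 0 = 0 := by
      have : A 1 0 * A 2 2 = 0 := by linear_combination h2 + A 1 2 * h20
      rcases mul_eq_zero.mp this with h | h
      · exact h
      · exact absurd h h22
    have h01 : A 0 1 = 0 := by
      have : A 0 1 * A 2 2 = 0 := by linear_combination h3 + A 0 2 * h21
      rcases mul_eq_zero.mp this with h | h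
      · exact h
      · exact absurd h h22
    have h11 : A 1 1 = A 0 0 := by
      have : A 1 1 * A 2 2 = A 0 0 * A 2 2 := by
        linear_combination h5 + A 1 2 * h21 - A 0 2 * h20
      exact mul_right_cancel₀ h22 this
    have h00 : A 0 0 ≠ 0 := by
      intro h
      apply hdet
      rw [hd, h20, h21, h10, h01, h11, h]
      ring
    refine ⟨A 2 2, A 0 0 / A 2 2, -A 0 2 / A 2 2, -A 1 2 / A 2 2, h22,
      div_ne_zero h00 h22, ?_⟩
    rw [Matrix.eta_fin_three A, h20, h21, h10, h01, h11]
    ext i j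
    fin_cases i <;> fin_cases j <;>
      simp only [Matrix.smul_apply, GBR, Matrix.cons_val', Matrix.cons_val_zero,
        Matrix.cons_val_one, Matrix.head_cons, Matrix.empty_val', Matrix.cons_val_fin_one,
        Matrix.head_fin_const, Matrix.of_apply, Matrix.cons_val_two, Matrix.tail_cons,
        smul_eq_mul, mul_zero, mul_one, Fin.reduceFinMk, Fin.zero_eta, Fin.mk_one] <;>
      field_simp
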